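/- Let f be tropical meromorphic with tropical characteristic T(r, f) = m(r, f) + N(r, f). Then T(r, f) - T(r, -f) = f(0) for every r > 0. -/

import Mathlib

open Set

/-- `f` is tropical meromorphic: continuous, piecewise linear with one-sided
slopes around every point, and `ω x` is the jump of the derivative at `x`
(right slope minus left slope); the jump points are discrete. -/
structure TropicalMero (f : ℝ → ℝ) (ω : ℝ → ℝ) : Prop where
  cont : Continuous f
  slopes : ∀ x : ℝ, ∃ ε > 0, ∃ sl sr : ℝ,
    (∀ y ∈ Set.Ioc (x - ε) x, f y = f x + sl * (y - x)) ∧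
    (∀ y ∈ Set.Ico x (x + ε), f y = f x + sr * (y - x)) ∧
    sr - sl = ω x
  discrete : ∀ r : ℝ, 0 < r → (Function.support ω ∩ Set.Ioo (-r) r).Finite

/-- Tropical proximity function. -/
noncomputable def mfun (f : ℝ → ℝ) (r : ℝ) : ℝ :=
  (max (f r) 0 + max (f (-r)) 0) / 2

/-- Tropical counting function for poles (points with `ω b < 0`) in `(-r, r)`. -/
noncomputable def Nfun (ω : ℝ → ℝ) (r : ℝ) : ℝ :=
  (1 / 2) * ∑ᶠ b ∈ {b : ℝ | b ∈ Set.Ioo (-r) r ∧ ω b < 0}, (-(ω b)) * (r - |b|)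

/-- Tropical characteristic function. -/
noncomputable def Tfun (f ω : ℝ → ℝ) (r : ℝ) : ℝ := mfun f r + Nfun ω r

/-- If `V` is locally affine with slope `c` on a right-neighborhood of `0` and
locally affine (with some slope) around every point of `(0,r)`, and continuous,
then `V r = V 0 + c * r`. -/
lemma key_affine (V : ℝ → ℝ) (c r : ℝ) (hr : 0 < r) (hV : Continuous V)
    (h0 : ∃ ε > 0, ∀ y ∈ Ico (0:ℝ) ε, V y = V 0 + c * y)
    (hint : ∀ x ∈ Ioo (0:ℝ) r, ∃ ε > 0, ∃ s : ℝ,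
      ∀ y ∈ Ioo (x - ε) (x + ε), V y = V x + s * (y - x)) :
    V r = V 0 + c * r := by
  obtain ⟨ε₀, hε₀, h0⟩ := h0
  -- U : points where V is locally affine with slope exactly c
  set U : Set ℝ := {x | ∃ ε > 0, ∀ y ∈ Ioo (x - ε) (x + ε), V y = V x + c * (y - x)} with hU
  -- O : points where V is locally affine with some slope ≠ c
  set O : Set ℝ := {x | ∃ ε > 0, ∃ s : ℝ, s ≠ c ∧
      ∀ y ∈ Ioo (x - ε) (x + ε), V y = V x + s * (y - x)} with hO
  have hUopen : IsOpen U := by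
    rw [isOpen_iff_forall_mem_open]
    rintro x ⟨ε, hε, hx⟩
    refine ⟨Ioo (x - ε) (x + ε), ?_, isOpen_Ioo, by simp [hε]⟩
    rintro y hy
    have hδ : (0:ℝ) < min (y - (x - ε)) (x + ε - y) :=
      lt_min (by linarith [hy.1]) (by linarith [hy.2])
    refine ⟨_, hδ, fun z hz => ?_⟩
    have hz' : z ∈ Ioo (x - ε) (x + ε) := by
      constructor
      · have := hz.1; have := min_le_left (y - (x - ε)) (x + ε - y); nlinarith [hz.1]
      · have := min_le_right (y - (x - ε)) (x + ε - y); nlinarith [hz.2]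
    rw [hx z hz', hx y hy]; ring
  have hOopen : IsOpen O := by
    rw [isOpen_iff_forall_mem_open]
    rintro x ⟨ε, hε, s, hs, hx⟩
    refine ⟨Ioo (x - ε) (x + ε), ?_, isOpen_Ioo, by simp [hε]⟩
    rintro y hy
    have hδ : (0:ℝ) < min (y - (x - ε)) (x + ε - y) :=
      lt_min (by linarith [hy.1]) (by linarith [hy.2])
    refine ⟨_, hδ, s, hs, fun z hz => ?_⟩
    have hz' : z ∈ Ioo (x - ε) (x + ε) := by
      constructor
      · have := min_le_left (y - (x - ε)) (x + ε - y); nlinarith [hz.1]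
      · have := min_le_right (y - (x - ε)) (x + ε - y); nlinarith [hz.2]
    rw [hx z hz', hx y hy]; ring
  have hcover : Ioo (0:ℝ) r ⊆ U ∪ O := by
    intro x hx
    obtain ⟨ε, hε, s, hs⟩ := hint x hx
    by_cases hsc : s = c
    · exact Or.inl ⟨ε, hε, by simpa [hsc] using hs⟩
    · exact Or.inr ⟨ε, hε, s, hsc, hs⟩
  -- a point of U inside (0, r)
  have hx0 : min ε₀ r / 2 ∈ Ioo (0:ℝ) r ∩ U := by
    set x₀ := min ε₀ r / 2 with hx₀def
    have hx₀pos : 0 < x₀ := by positivity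
    have hx₀lt : x₀ < r := by
      have : min ε₀ r ≤ r := min_le_right _ _
      simp only [hx₀def]; linarith
    have hx₀lt' : x₀ < ε₀ := by
      have : min ε₀ r ≤ ε₀ := min_le_left _ _
      simp only [hx₀def]; linarith
    refine ⟨⟨hx₀pos, hx₀lt⟩, min x₀ (ε₀ - x₀), lt_min hx₀pos (by linarith), fun y hy => ?_⟩
    have h1 : (0:ℝ) ≤ y := by
      have := min_le_left x₀ (ε₀ - x₀); linarith [hy.1]
    have h2 : y < ε₀ := by
      have := min_le_right x₀ (ε₀ - x₀); linarith [hy.2]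
    rw [h0 y ⟨h1, h2⟩, h0 x₀ ⟨le_of_lt hx₀pos, hx₀lt'⟩]; ring
  -- O does not meet (0, r)
  have hOempty : Ioo (0:ℝ) r ∩ O = ∅ := by
    by_contra hne
    obtain ⟨z, hz⟩ := (isPreconnected_Ioo (a := (0:ℝ)) (b := r)) U O hUopen hOopen hcover
      ⟨_, hx0.1, hx0.2⟩ (by
        rcases Set.nonempty_iff_ne_empty.2 hne with ⟨w, hw⟩
        exact ⟨w, hw.1, hw.2⟩)
    obtain ⟨hzI, ⟨ε₁, hε₁, hzU⟩, ⟨ε₂, hε₂, s, hsne, hzO⟩⟩ := hz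
    set y := z + min ε₁ ε₂ / 2 with hydef
    have hym : 0 < min ε₁ ε₂ / 2 := by positivity
    have hy1 : y ∈ Ioo (z - ε₁) (z + ε₁) := by
      constructor
      · simp only [hydef]; linarith
      · have := min_le_left ε₁ ε₂; simp only [hydef]; linarith
    have hy2 : y ∈ Ioo (z - ε₂) (z + ε₂) := by
      constructor
      · simp only [hydef]; linarith
      · have := min_le_right ε₁ ε₂; simp only [hydef]; linarith
    have e1 := hzU y hy1
    have e2 := hzO y hy2
    have : c * (y - z) = s * (y - z) := by linarith
    have hyz : y - z ≠ 0 := by simp only [hydef]; intro hcon; linarith [hym]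
    exact hsne (mul_right_cancel₀ hyz (by linarith : s * (y - z) = c * (y - z)))
  have hsubU : Ioo (0:ℝ) r ⊆ U := by
    intro x hx
    rcases hcover hx with h | h
    · exact h
    · exact absurd (Set.mem_inter hx h) (by rw [hOempty]; exact notMem_empty x)
  -- now apply constant_of_has_deriv_right_zero to V - c * id
  set G : ℝ → ℝ := fun t => V t - c * t with hG
  have hGcont : ContinuousOn G (Icc 0 r) :=
    (hV.sub (continuous_const.mul continuous_id)).continuousOn
  have hGderiv : ∀ x ∈ Ico (0:ℝ) r, HasDerivWithinAt G 0 (Ici x) x := by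
    intro x hx
    rcases eq_or_lt_of_le hx.1 with h0x | h0x
    · -- x = 0
      subst h0x
      have hmem : Ico (0:ℝ) ε₀ ∈ nhdsWithin (0:ℝ) (Ici 0) :=
        Ico_mem_nhdsGE_of_mem ⟨le_refl _, hε₀⟩
      refine (hasDerivWithinAt_const (0:ℝ) (Ici (0:ℝ)) (G 0)).congr_of_eventuallyEq ?_ rfl
      filter_upwards [hmem] with y hy
      simp only [hG]
      rw [h0 y hy]; ring
    · obtain ⟨ε, hε, hxU⟩ := hsubU ⟨h0x, hx.2⟩
      have hmem : Ioo (x - ε) (x + ε) ∈ nhdsWithin x (Ici x) :=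
        mem_nhdsWithin_of_mem_nhds (Ioo_mem_nhds (by linarith) (by linarith))
      refine (hasDerivWithinAt_const x (Ici x) (G x)).congr_of_eventuallyEq ?_ rfl
      filter_upwards [hmem] with y hy
      simp only [hG]
      rw [hxU y hy]; ring
  have := constant_of_has_deriv_right_zero hGcont hGderiv r ⟨le_of_lt hr, le_refl r⟩
  simp only [hG] at this
  linarith [this]

lemma lemA (f ω : ℝ → ℝ) (h : TropicalMero f ω) (r : ℝ) (hr : 0 < r)
    (S : Finset ℝ) (hS : ∀ b : ℝ, b ∈ S ↔ (ω b ≠ 0 ∧ b ∈ Ioo 0 r))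
    (sr ε₀ : ℝ) (hε₀ : 0 < ε₀)
    (h0 : ∀ y ∈ Ico (0:ℝ) ε₀, f y = f 0 + sr * y) :
    f r = f 0 + sr * r + ∑ b ∈ S, ω b * (r - b) := by
  classical
  set V : ℝ → ℝ := fun t => f t - ∑ b ∈ S, ω b * max (t - b) 0 with hVdef
  have hbpos : ∀ b ∈ S, 0 < b := fun b hb => ((hS b).1 hb).2.1
  have hblt : ∀ b ∈ S, b < r := fun b hb => ((hS b).1 hb).2.2
  have hV0 : V 0 = f 0 := by
    simp only [hVdef]
    have : ∀ b ∈ S, ω b * max ((0:ℝ) - b) 0 = 0 := by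
      intro b hb
      rw [max_eq_right (by linarith [hbpos b hb])]; ring
    rw [Finset.sum_congr rfl this]; simp
  have hVr : V r = f r - ∑ b ∈ S, ω b * (r - b) := by
    simp only [hVdef]
    congr 1
    refine Finset.sum_congr rfl fun b hb => ?_
    rw [max_eq_left (by linarith [hblt b hb])]
  have hVcont : Continuous V := by
    apply h.cont.sub
    exact continuous_finset_sum _ fun b _ =>
      (continuous_const.mul ((continuous_id.sub continuous_const).max continuous_const))
  have hkey : V r = V 0 + sr * r := by
    apply key_affine V sr r hr hVcont
    · -- right-neighborhood of 0
      set ε : ℝ := (insert ε₀ S).min' ⟨ε₀, Finset.mem_insert_self _ _⟩ with hεdef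
      have hεmem := Finset.min'_mem (insert ε₀ S) ⟨ε₀, Finset.mem_insert_self _ _⟩
      have hεpos : 0 < ε := by
        rw [← hεdef] at hεmem
        rcases Finset.mem_insert.1 hεmem with h' | h'
        · rw [h']; exact hε₀
        · exact hbpos _ h'
      have hεε₀ : ε ≤ ε₀ := Finset.min'_le _ _ (Finset.mem_insert_self _ _)
      have hεb : ∀ b ∈ S, ε ≤ b := fun b hb =>
        Finset.min'_le _ _ (Finset.mem_insert_of_mem hb)
      refine ⟨ε, hεpos, fun y hy => ?_⟩
      have hfy : f y = f 0 + sr * y := h0 y ⟨hy.1, lt_of_lt_of_le hy.2 hεε₀⟩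
      have hsum : ∀ b ∈ S, ω b * max (y - b) 0 = 0 := by
        intro b hb
        rw [max_eq_right (by linarith [hεb b hb, hy.2])]; ring
      simp only [hVdef]
      rw [Finset.sum_congr rfl hsum, hfy]
      have hz : ∑ b ∈ S, ω b * max ((0:ℝ) - b) 0 = 0 :=
        Finset.sum_eq_zero fun b hb => by
          rw [max_eq_right (by linarith [hbpos b hb])]; ring
      rw [hz]
      simp
    · -- interior points
      intro x hx
      obtain ⟨ε₁, hε₁, sl', sr', hl, hrt, hj⟩ := h.slopes x
      set T : Finset ℝ := (S.erase x).image (fun b => |b - x|) with hTdef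
      set ε₂ : ℝ := (insert ε₁ T).min' ⟨ε₁, Finset.mem_insert_self _ _⟩ with hε₂def
      have hε₂mem := Finset.min'_mem (insert ε₁ T) ⟨ε₁, Finset.mem_insert_self _ _⟩
      have hε₂pos : 0 < ε₂ := by
        rw [← hε₂def] at hε₂mem
        rcases Finset.mem_insert.1 hε₂mem with h' | h'
        · rw [h']; exact hε₁
        · simp only [hTdef, Finset.mem_image] at h'
          obtain ⟨b, hb, hb'⟩ := h'
          rw [← hb']
          exact abs_pos.2 (sub_ne_zero.2 (Finset.mem_erase.1 hb).1)
      have hε₂ε₁ : ε₂ ≤ ε₁ := Finset.min'_le _ _ (Finset.mem_insert_self _ _)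
      have hdist : ∀ b ∈ S, b ≠ x → ε₂ ≤ |b - x| := fun b hb hbx =>
        Finset.min'_le _ _ (Finset.mem_insert_of_mem
          (Finset.mem_image_of_mem _ (Finset.mem_erase.2 ⟨hbx, hb⟩)))
      set s : ℝ := sl' - ∑ b ∈ S.filter (fun b => b < x), ω b with hsdef
      refine ⟨ε₂, hε₂pos, s, fun y hy => ?_⟩
      have hωx : (if x ∈ S then ω x else 0) = ω x := by
        by_cases hxS : x ∈ S
        · rw [if_pos hxS]
        · rw [if_neg hxS]
          by_contra hcon
          exact hxS ((hS x).2 ⟨fun h' => hcon (by rw [h']), hx⟩)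
      rcases le_or_gt y x with hyx | hyx
      · -- left side
        have hfy : f y = f x + sl' * (y - x) :=
          hl y ⟨by linarith [hy.1, hε₂ε₁], hyx⟩
        have hterm : ∀ b ∈ S, ω b * max (y - b) 0 - ω b * max (x - b) 0
            = if b < x then ω b * (y - x) else 0 := by
          intro b hb
          rcases lt_trichotomy b x with hbx | hbx | hbx
          · have hd : ε₂ ≤ x - b := by
              have := hdist b hb (ne_of_lt hbx)
              rwa [abs_of_neg (by linarith), neg_sub] at this
            rw [if_pos hbx, max_eq_left (by linarith [hy.1]),
              max_eq_left (by linarith)]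
            ring
          · subst hbx
            rw [if_neg (lt_irrefl _), max_eq_right (by linarith),
              max_eq_right (by linarith)]
            ring
          · have hd : ε₂ ≤ b - x := by
              have := hdist b hb (ne_of_gt hbx)
              rwa [abs_of_pos (by linarith)] at this
            rw [if_neg (not_lt.2 (le_of_lt hbx)), max_eq_right (by linarith),
              max_eq_right (by linarith)]
            ring
        have hsum : ∑ b ∈ S, ω b * max (y - b) 0 - ∑ b ∈ S, ω b * max (x - b) 0
            = (∑ b ∈ S.filter (fun b => b < x), ω b) * (y - x) := by
          rw [← Finset.sum_sub_distrib, Finset.sum_congr rfl hterm,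
            ← Finset.sum_filter, ← Finset.sum_mul]
        show V y = V x + s * (y - x)
        simp only [hVdef, hsdef]
        rw [hfy]
        linear_combination - hsum
      · -- right side
        have hfy : f y = f x + sr' * (y - x) :=
          hrt y ⟨le_of_lt hyx, by linarith [hy.2, hε₂ε₁]⟩
        have hterm : ∀ b ∈ S, ω b * max (y - b) 0 - ω b * max (x - b) 0
            = (if b < x then ω b * (y - x) else 0)
              + (if b = x then ω b * (y - x) else 0) := by
          intro b hb
          rcases lt_trichotomy b x with hbx | hbx | hbx
          · have hd : ε₂ ≤ x - b := by
              have := hdist b hb (ne_of_lt hbx)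
              rwa [abs_of_neg (by linarith), neg_sub] at this
            rw [if_pos hbx, if_neg (ne_of_lt hbx), max_eq_left (by linarith),
              max_eq_left (by linarith)]
            ring
          · subst hbx
            rw [if_neg (lt_irrefl _), if_pos rfl, max_eq_left (by linarith),
              max_eq_right (by linarith)]
            ring
          · have hd : ε₂ ≤ b - x := by
              have := hdist b hb (ne_of_gt hbx)
              rwa [abs_of_pos (by linarith)] at this
            rw [if_neg (not_lt.2 (le_of_lt hbx)), if_neg (ne_of_gt hbx),
              max_eq_right (by linarith [hy.2]), max_eq_right (by linarith)]
            ring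
        have hsum : ∑ b ∈ S, ω b * max (y - b) 0 - ∑ b ∈ S, ω b * max (x - b) 0
            = (∑ b ∈ S.filter (fun b => b < x), ω b) * (y - x) + ω x * (y - x) := by
          rw [← Finset.sum_sub_distrib, Finset.sum_congr rfl hterm,
            Finset.sum_add_distrib, ← Finset.sum_filter, ← Finset.sum_mul,
            Finset.sum_ite_eq' S x (fun b => ω b * (y - x))]
          congr 1
          by_cases hxS : x ∈ S
          · rw [if_pos hxS]
          · rw [if_neg hxS]
            have : ω x = 0 := by
              by_contra hcon
              exact hxS ((hS x).2 ⟨hcon, hx⟩)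
            rw [this]; ring
        show V y = V x + s * (y - x)
        simp only [hVdef, hsdef]
        rw [hfy]
        have hj' : sr' = sl' + ω x := by linarith [hj]
        rw [hj']
        linear_combination - hsum
  rw [hVr, hV0] at hkey
  linarith [hkey]

lemma tropNeg (f ω : ℝ → ℝ) (h : TropicalMero f ω) :
    TropicalMero (fun t => f (-t)) (fun t => ω (-t)) := by
  constructor
  · exact h.cont.comp continuous_neg
  · intro x
    obtain ⟨ε, hε, sl, sr, hl, hrt, hj⟩ := h.slopes (-x)
    refine ⟨ε, hε, -sr, -sl, ?_, ?_, by linarith⟩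
    · intro y hy
      have hm : -y ∈ Ico (-x) (-x + ε) := ⟨by linarith [hy.2], by linarith [hy.1]⟩
      have := hrt (-y) hm
      show f (-y) = f (-x) + (-sr) * (y - x)
      rw [this]; ring
    · intro y hy
      have hm : -y ∈ Ioc (-x - ε) (-x) := ⟨by linarith [hy.2], by linarith [hy.1]⟩
      have := hl (-y) hm
      show f (-y) = f (-x) + (-sl) * (y - x)
      rw [this]; ring
  · intro r hr
    apply Set.Finite.subset ((h.discrete r hr).image (fun t => -t))
    rintro b ⟨hb1, hb2⟩
    refine ⟨-b, ⟨?_, ?_⟩, by ring⟩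
    · exact hb1
    · exact ⟨by linarith [hb2.2], by linarith [hb2.1]⟩


/-- Tropical Jensen formula in characteristic-function form:
`T(r, f) - T(r, -f) = f(0)`. Note that the derivative-jump function of `-f`
is `-ω`. -/
theorem stmt4 (f ω : ℝ → ℝ) (h : TropicalMero f ω) (r : ℝ) (hr : 0 < r) :
    Tfun f ω r - Tfun (fun x => -f x) (fun x => -ω x) r = f 0 := by
  classical
  set Sall : Finset ℝ := (h.discrete r hr).toFinset with hSall
  have hmem : ∀ b : ℝ, b ∈ Sall ↔ (ω b ≠ 0 ∧ b ∈ Ioo (-r) r) := by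
    intro b
    simp [hSall, Set.Finite.mem_toFinset, Function.mem_support]
  set Spos : Finset ℝ := Sall.filter (fun b => 0 < b) with hSpos
  set Sneg : Finset ℝ := Sall.filter (fun b => b < 0) with hSneg
  obtain ⟨ε₀, hε₀, sl, sr, hl, hrt, hj⟩ := h.slopes 0
  -- right half-line formula
  have hfr : f r = f 0 + sr * r + ∑ b ∈ Spos, ω b * (r - b) := by
    apply lemA f ω h r hr Spos _ sr ε₀ hε₀
    · intro y hy
      have := hrt y ⟨hy.1, by simpa using hy.2⟩
      simpa using this
    · intro b
      simp only [hSpos, Finset.mem_filter, hmem, mem_Ioo]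
      constructor
      · rintro ⟨⟨h1, _, h3⟩, h4⟩; exact ⟨h1, h4, h3⟩
      · rintro ⟨h1, h2, h3⟩; exact ⟨⟨h1, by linarith, h3⟩, h2⟩
  -- left half-line formula via the reflected function
  have hg := tropNeg f ω h
  set Sg : Finset ℝ := Sneg.image (fun b => -b) with hSg
  have hfnegr : f (-r) = f 0 + (-sl) * r + ∑ b ∈ Sg, ω (-b) * (r - b) := by
    have := lemA (fun t => f (-t)) (fun t => ω (-t)) hg r hr Sg ?_ (-sl) ε₀ hε₀ ?_
    · simpa using this
    · intro b
      simp only [hSg, Finset.mem_image, hSneg, Finset.mem_filter, hmem, mem_Ioo]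
      constructor
      · rintro ⟨a, ⟨⟨h1, h2, h3⟩, h4⟩, rfl⟩
        exact ⟨by simpa using h1, by linarith, by linarith⟩
      · rintro ⟨h1, h2, h3⟩
        exact ⟨-b, ⟨⟨by simpa using h1, by linarith, by linarith⟩, by linarith⟩, by ring⟩
    · intro y hy
      have hm : -y ∈ Ioc (0 - ε₀) 0 := ⟨by linarith [hy.2], by linarith [hy.1]⟩
      have := hl (-y) hm
      show f (-y) = f (-0) + (-sl) * y
      rw [this]; ring_nf
  have hsumg : ∑ b ∈ Sg, ω (-b) * (r - b) = ∑ a ∈ Sneg, ω a * (r + a) := by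
    rw [hSg, Finset.sum_image (fun x _ y _ hxy => by linarith [hxy] : ∀ x ∈ Sneg, ∀ y ∈ Sneg, -x = -y → x = y)]
    refine Finset.sum_congr rfl fun a _ => ?_
    rw [neg_neg]; ring
  -- split the full sum
  set F : ℝ → ℝ := fun b => ω b * (r - |b|) with hF
  have habs_pos : ∑ b ∈ Spos, F b = ∑ b ∈ Spos, ω b * (r - b) :=
    Finset.sum_congr rfl fun b hb => by
      have : 0 < b := (Finset.mem_filter.1 hb).2
      simp only [hF]; rw [abs_of_pos this]
  have habs_neg : ∑ b ∈ Sneg, F b = ∑ b ∈ Sneg, ω b * (r + b) :=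
    Finset.sum_congr rfl fun b hb => by
      have : b < 0 := (Finset.mem_filter.1 hb).2
      simp only [hF]; rw [abs_of_neg this]; ring_nf
  have hsplit : ∑ b ∈ Sall, F b = ∑ b ∈ Spos, F b + ∑ b ∈ Sneg, F b + ω 0 * r := by
    have e1 : ∑ b ∈ Sall, F b
        = ∑ b ∈ Sall.filter (fun b => 0 < b), F b
          + ∑ b ∈ Sall.filter (fun b => ¬ 0 < b), F b :=
      (Finset.sum_filter_add_sum_filter_not _ _ _).symm
    have e2 : ∑ b ∈ Sall.filter (fun b => ¬ 0 < b), F b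
        = ∑ b ∈ (Sall.filter (fun b => ¬ 0 < b)).filter (fun b => b < 0), F b
          + ∑ b ∈ (Sall.filter (fun b => ¬ 0 < b)).filter (fun b => ¬ b < 0), F b :=
      (Finset.sum_filter_add_sum_filter_not _ _ _).symm
    have e3 : (Sall.filter (fun b => ¬ 0 < b)).filter (fun b => b < 0) = Sneg := by
      rw [hSneg, Finset.filter_filter]
      exact Finset.filter_congr fun b _ => by constructor <;> intro h' <;>
        [exact h'.2; exact ⟨not_lt.2 (le_of_lt h'), h'⟩]
    have e4 : (Sall.filter (fun b => ¬ 0 < b)).filter (fun b => ¬ b < 0) = Sall.filter (fun b => b = 0) := by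
      rw [Finset.filter_filter]
      exact Finset.filter_congr fun b _ => by
        constructor
        · rintro ⟨h1, h2⟩; linarith [not_lt.1 h1, not_lt.1 h2]
        · rintro rfl; exact ⟨lt_irrefl 0, lt_irrefl 0⟩
    have e5 : ∑ b ∈ Sall.filter (fun b => b = 0), F b = ω 0 * r := by
      rw [Finset.sum_filter]
      have : ∀ b ∈ Sall, (if b = 0 then F b else 0) = (if b = 0 then F 0 else 0) := by
        intro b _
        by_cases h' : b = 0
        · rw [if_pos h', if_pos h', h']
        · rw [if_neg h', if_neg h']
      rw [Finset.sum_congr rfl this, Finset.sum_ite_eq' Sall 0 (fun _ => F 0)]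
      by_cases h0 : (0:ℝ) ∈ Sall
      · rw [if_pos h0]; simp only [hF]; simp
      · rw [if_neg h0]
        have hω0 : ω 0 = 0 := by
          by_contra hcon
          exact h0 ((hmem 0).2 ⟨hcon, by constructor <;> linarith⟩)
        rw [hω0]; ring
    rw [e1, e2, e3, e4, e5, ← hSpos]
    ring
  -- counting function difference
  have hNdiff : Nfun ω r - Nfun (fun x => -ω x) r = -(1/2) * ∑ b ∈ Sall, F b := by
    have hset1 : {b : ℝ | b ∈ Set.Ioo (-r) r ∧ ω b < 0}
        = ↑(Sall.filter (fun b => ω b < 0)) := by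
      ext b
      simp only [mem_setOf_eq, Finset.coe_filter, hmem, mem_Ioo]
      constructor
      · rintro ⟨h1, h2⟩; exact ⟨⟨ne_of_lt h2, h1⟩, h2⟩
      · rintro ⟨⟨_, h1⟩, h2⟩; exact ⟨h1, h2⟩
    have hset2 : {b : ℝ | b ∈ Set.Ioo (-r) r ∧ (fun x => -ω x) b < 0}
        = ↑(Sall.filter (fun b => 0 < ω b)) := by
      ext b
      simp only [mem_setOf_eq, Finset.coe_filter, hmem, mem_Ioo, neg_lt_zero]
      constructor
      · rintro ⟨h1, h2⟩; exact ⟨⟨ne_of_gt h2, h1⟩, h2⟩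
      · rintro ⟨⟨_, h1⟩, h2⟩; exact ⟨h1, h2⟩
    rw [Nfun, Nfun, hset1, hset2, finsum_mem_coe_finset, finsum_mem_coe_finset]
    have hns : ∑ b ∈ Sall.filter (fun b => ω b < 0), (-(ω b)) * (r - |b|)
        = - ∑ b ∈ Sall.filter (fun b => ω b < 0), F b := by
      rw [← Finset.sum_neg_distrib]
      exact Finset.sum_congr rfl fun b _ => by simp only [hF]; ring
    have hps : ∑ b ∈ Sall.filter (fun b => 0 < ω b), (-(-ω b)) * (r - |b|)
        = ∑ b ∈ Sall.filter (fun b => 0 < ω b), F b :=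
      Finset.sum_congr rfl fun b _ => by simp only [hF]; ring
    rw [hns, hps]
    have hpart : ∑ b ∈ Sall, F b
        = ∑ b ∈ Sall.filter (fun b => ω b < 0), F b
          + ∑ b ∈ Sall.filter (fun b => 0 < ω b), F b := by
      rw [← Finset.sum_filter_add_sum_filter_not Sall (fun b => ω b < 0) F]
      congr 1
      exact Finset.sum_congr (Finset.filter_congr fun b hb => by
        have := ((hmem b).1 hb).1
        constructor
        · intro h'; exact lt_of_le_of_ne (not_lt.1 h') (Ne.symm this)
        · intro h'; exact not_lt.2 (le_of_lt h')) fun _ _ => rfl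
    linarith [hpart]
  -- proximity function difference
  have hmdiff : mfun f r - mfun (fun x => -f x) r = (f r + f (-r)) / 2 := by
    rw [mfun, mfun]
    have h1 := max_zero_sub_max_neg_zero_eq_self (f r)
    have h2 := max_zero_sub_max_neg_zero_eq_self (f (-r))
    show (max (f r) 0 + max (f (-r)) 0) / 2
        - (max (-f r) 0 + max (-f (-r)) 0) / 2 = (f r + f (-r)) / 2
    linarith [h1, h2]
  -- put everything together
  have hj' : sr - sl = ω 0 := hj
  rw [Tfun, Tfun]
  have : mfun f r + Nfun ω r - (mfun (fun x => -f x) r + Nfun (fun x => -ω x) r)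
      = (mfun f r - mfun (fun x => -f x) r) + (Nfun ω r - Nfun (fun x => -ω x) r) := by ring
  rw [this, hmdiff, hNdiff, hsplit, habs_pos, habs_neg]
  rw [hfr, hfnegr, hsumg]
  linear_combination (r / 2) * hj'
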